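/- Let G be a group abstractly isomorphic to the group G(p) = ⟨a_1,...,a_p | a_1⋯a_p = a_2⋯a_p a_1 = ⋯ = a_p a_1⋯a_{p−1}⟩. If X = {x_1,...,x_p} is a generating subset of G such that x_1⋯x_p generates Z(G), then the correspondence a_i ↦ x_i induces an isomorphism, i.e., G admits the presentation ⟨x_1,...,x_p | x_1⋯x_p = x_2⋯x_p x_1 = ⋯ = x_p x_1⋯x_{p−1}⟩. -/

import Mathlib

/-- The cyclically rotated product `a_i a_{i+1} ⋯ a_{i+p-1}` in the free group on `Fin p`
(indices taken mod `p`). -/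
def cycProd (p : ℕ) (i : Fin p) : FreeGroup (Fin p) :=
  (List.ofFn (fun j : Fin p => FreeGroup.of (i + j))).prod

/-- Relators of the generalized parent J-group `J(K)`:
`⟨s_1,…,s_p ∣ s_1⋯s_p = s_2⋯s_p s_1 = ⋯ = s_p s_1⋯s_{p-1}, s_i^{k_i} = 1 if k_i < ∞⟩`.
Here `k i = 0` encodes `k_i = ∞` (the relator `s_i ^ 0` is vacuous), and the equalities of
all cyclic rotations of the product are encoded by the relators
`(s_i ⋯ s_{i+p-1}) (s_j ⋯ s_{j+p-1})⁻¹`. -/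
def JRels (p : ℕ) (k : Fin p → ℕ) : Set (FreeGroup (Fin p)) :=
  {r | (∃ i, r = FreeGroup.of i ^ k i) ∨ ∃ i j, r = cycProd p i * (cycProd p j)⁻¹}

/-- The generalized parent J-group `J(K)`. -/
abbrev JGroup (p : ℕ) (k : Fin p → ℕ) := PresentedGroup (JRels p k)

/-- The central element `z = s_1 s_2 ⋯ s_p` of `J(K)`. -/
def zElt (p : ℕ) (k : Fin p → ℕ) : JGroup p k :=
  (List.ofFn (fun i : Fin p => (PresentedGroup.of i : JGroup p k))).prod

namespace Stmt10

open FreeGroup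

variable {α : Type} [DecidableEq α]

/-- In a reduced word there is no adjacent cancelling pair. -/
lemma reduced_no_cancel {L : List (α × Bool)} (h : FreeGroup.reduce L = L)
    {k : ℕ} {x : α} {b : Bool} (h1 : L[k]? = some (x, b)) (h2 : L[k+1]? = some (x, !b)) :
    False := by
  rw [List.getElem?_eq_some_iff] at h1 h2
  obtain ⟨hk1, e1⟩ := h1
  obtain ⟨hk2, e2⟩ := h2
  have hL : L = L.take k ++ (x, b) :: (x, !b) :: L.drop (k + 2) := by
    conv_lhs => rw [← List.take_append_drop k L]
    congr 1
    rw [List.drop_eq_getElem_cons hk1, e1]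
    congr 1
    rw [List.drop_eq_getElem_cons hk2, e2]
  exact FreeGroup.reduce.not (h.trans hL)

lemma reduced_rev_no_cancel {L : List (α × Bool)} (h : FreeGroup.reduce L = L)
    {k : ℕ} {x : α} {b : Bool} (h1 : L.reverse[k]? = some (x, b))
    (h2 : L.reverse[k+1]? = some (x, !b)) : False := by
  have hk2 : k + 1 < L.length := by
    have := (List.getElem?_eq_some_iff.mp h2).1; simpa using this
  have hk1 : k < L.length := by omega
  rw [List.getElem?_reverse hk1] at h1
  rw [List.getElem?_reverse hk2] at h2
  -- positions: L[L.length - 1 - (k+1)] = (x, !b), next one is L[L.length-1-k] = (x,b)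
  have hidx : L.length - 1 - (k+1) + 1 = L.length - 1 - k := by omega
  refine reduced_no_cancel h (k := L.length - 1 - (k+1)) (x := x) (b := !b) h2 ?_
  rw [hidx, Bool.not_not]
  exact h1

end Stmt10

namespace Stmt10

open FreeGroup

variable {α : Type} [DecidableEq α]

variable (R : List (α × Bool))

/-- domain of the crossing partial bijection for letter `a`. -/
def DomP (a : α) (m : Fin (R.length + 1)) : Prop :=
  R[(m : ℕ)]? = some (a, true) ∨ (0 < (m : ℕ) ∧ R[(m : ℕ) - 1]? = some (a, false))

def CodP (a : α) (m : Fin (R.length + 1)) : Prop :=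
  (0 < (m : ℕ) ∧ R[(m : ℕ) - 1]? = some (a, true)) ∨ R[(m : ℕ)]? = some (a, false)

instance (a : α) : DecidablePred (DomP R a) := fun m => by unfold DomP; infer_instance
instance (a : α) : DecidablePred (CodP R a) := fun m => by unfold CodP; infer_instance

variable {R}
variable (hred : ∀ (k : ℕ) (x : α) (b : Bool),
  R[k]? = some (x, b) → R[k+1]? = some (x, !b) → False)

/-- The crossing bijection between `DomP` and `CodP`. -/
def domEquiv (a : α) : {m : Fin (R.length + 1) // DomP R a m} ≃ {m // CodP R a m} where
  toFun s :=
    if h1 : R[(s.1 : ℕ)]? = some (a, true) then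
      ⟨⟨(s.1 : ℕ) + 1, by have := (List.getElem?_eq_some_iff.mp h1).1; omega⟩,
        Or.inl ⟨Nat.succ_pos _, by simpa using h1⟩⟩
    else
      ⟨⟨(s.1 : ℕ) - 1, by omega⟩, Or.inr (s.2.resolve_left h1).2⟩
  invFun s :=
    if h1 : 0 < (s.1 : ℕ) ∧ R[(s.1 : ℕ) - 1]? = some (a, true) then
      ⟨⟨(s.1 : ℕ) - 1, by omega⟩, Or.inl h1.2⟩
    else
      ⟨⟨(s.1 : ℕ) + 1, by
          have h2 := s.2.resolve_left h1
          have := (List.getElem?_eq_some_iff.mp h2).1; omega⟩,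
        Or.inr ⟨Nat.succ_pos _, by
          have h2 := s.2.resolve_left h1
          simpa using h2⟩⟩
  left_inv s := by
    rcases s with ⟨⟨m, hmlt⟩, hm⟩
    dsimp only
    split_ifs with h1 h2 h3
    · exact Subtype.ext (Fin.ext (by simp))
    · exfalso; apply h2
      refine ⟨by simp, by simpa using h1⟩
    · exfalso
      simp only [Fin.val_mk] at h3
      have h2 := hm.resolve_left (by simpa using h1)
      simp only [Fin.val_mk] at h2
      refine hred (m - 1 - 1) a true h3.2 ?_
      have he : m - 1 - 1 + 1 = m - 1 := by omega
      rw [he]; exact h2.2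
    · have h2 := hm.resolve_left (by simpa using h1)
      simp only [Fin.val_mk] at h2
      apply Subtype.ext; apply Fin.ext; simp; omega
  right_inv s := by
    rcases s with ⟨⟨m, hmlt⟩, hm⟩
    dsimp only
    split_ifs with h1 h2 h3
    · apply Subtype.ext; apply Fin.ext; simp; omega
    · exfalso; exact h2 h1.2
    · exfalso
      simp only [Fin.val_mk] at h3
      have h2 := hm.resolve_left (by simpa using h1)
      simp only [Fin.val_mk] at h2
      exact hred m a false h2 (by simpa using h3)
    · have h2 := hm.resolve_left (by simpa using h1)
      simp only [Fin.val_mk] at h2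
      apply Subtype.ext; apply Fin.ext; simp
end Stmt10

namespace Stmt10

open FreeGroup

variable {α : Type} [DecidableEq α] {R : List (α × Bool)}
variable (hred : ∀ (k : ℕ) (x : α) (b : Bool),
  R[k]? = some (x, b) → R[k+1]? = some (x, !b) → False)

/-- the permutation associated to the letter `a`. -/
noncomputable def sig (a : α) : Equiv.Perm (Fin (R.length + 1)) :=
  (domEquiv hred a).extendSubtype

lemma sig_up {a : α} {m : ℕ} (hm : m < R.length) (h : R[m]? = some (a, true)) :
    sig hred a ⟨m, by omega⟩ = ⟨m + 1, by omega⟩ := by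
  have hd : DomP R a ⟨m, by omega⟩ := Or.inl (by simpa using h)
  rw [sig, Equiv.extendSubtype_apply_of_mem _ _ hd]
  have : (domEquiv hred a ⟨⟨m, by omega⟩, hd⟩) =
      ⟨⟨m + 1, by omega⟩, Or.inl ⟨Nat.succ_pos _, by simpa using h⟩⟩ := by
    rw [domEquiv]
    simp only [Equiv.coe_fn_mk]
    rw [dif_pos (by simpa using h)]
  rw [this]

lemma sig_down {a : α} {m : ℕ} (hm : m < R.length) (h : R[m]? = some (a, false)) :
    sig hred a ⟨m + 1, by omega⟩ = ⟨m, by omega⟩ := by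
  have hd : DomP R a ⟨m + 1, by omega⟩ := Or.inr ⟨Nat.succ_pos _, by simpa using h⟩
  rw [sig, Equiv.extendSubtype_apply_of_mem _ _ hd]
  have : (domEquiv hred a ⟨⟨m + 1, by omega⟩, hd⟩) =
      ⟨⟨m, by omega⟩, Or.inr (by simpa using h)⟩ := by
    rw [domEquiv]
    simp only [Equiv.coe_fn_mk]
    rw [dif_neg]
    · apply Subtype.ext; apply Fin.ext; simp
    · intro hcon
      exact hred m a false h (by simpa using hcon)
  rw [this]

end Stmt10

namespace Stmt10

open FreeGroup

variable {α : Type} [DecidableEq α]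

lemma sig_eval {L : List (α × Bool)} (hL : FreeGroup.reduce L = L)
    (hredR : ∀ (k : ℕ) (x : α) (b : Bool),
      L.reverse[k]? = some (x, b) → L.reverse[k+1]? = some (x, !b) → False)
    (j : ℕ) (hj : j ≤ L.length) :
    (((L.drop (L.length - j)).map fun x =>
        cond x.2 (sig hredR x.1) (sig hredR x.1)⁻¹).prod)
      ⟨0, Nat.succ_pos _⟩ = ⟨j, by simp; omega⟩ := by
  induction j with
  | zero => simp
  | succ j ih =>
    have hjlt : j < L.length := by omega
    have hd : L.drop (L.length - (j+1)) =
        L[L.length - (j+1)] :: L.drop (L.length - (j+1) + 1) :=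
      List.drop_eq_getElem_cons (by omega)
    have he : L.length - (j+1) + 1 = L.length - j := by omega
    rw [hd, he, List.map_cons, List.prod_cons, Equiv.Perm.mul_apply, ih (by omega)]
    have hRj : L.reverse[j]? = some (L[L.length - (j+1)]) := by
      have hjR : j < L.reverse.length := by simpa using hjlt
      rw [List.getElem?_eq_getElem hjR, List.getElem_reverse]
      have hi : L.length - 1 - j = L.length - (j+1) := by omega
      simp only [hi]
    rcases hx : L[L.length - (j+1)] with ⟨a, b⟩
    rw [hx] at hRj
    cases b with
    | true =>
      simpa using sig_up hredR (by simpa using hjlt) hRj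
    | false =>
      have hdn := sig_down hredR (m := j) (by simpa using hjlt) hRj
      simp only [cond_false]
      rw [← hdn, Equiv.Perm.inv_def, Equiv.symm_apply_apply]

theorem exists_perm_hom (w : FreeGroup α) (hw : w ≠ 1) :
    ∃ (N : ℕ) (π : FreeGroup α →* Equiv.Perm (Fin (N + 1))), π w ≠ 1 := by
  have hL : FreeGroup.reduce w.toWord = w.toWord := reduce_toWord w
  have hredR : ∀ (k : ℕ) (x : α) (b : Bool),
      w.toWord.reverse[k]? = some (x, b) → w.toWord.reverse[k+1]? = some (x, !b) → False :=
    fun k x b h1 h2 => reduced_rev_no_cancel hL h1 h2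
  refine ⟨w.toWord.reverse.length, FreeGroup.lift (fun a => sig hredR a), ?_⟩
  intro hcon
  have h0 : FreeGroup.lift (fun a => sig hredR a) (FreeGroup.mk w.toWord) = 1 := by
    rw [mk_toWord]; exact hcon
  rw [lift_mk] at h0
  have hev := sig_eval hL hredR w.toWord.length le_rfl
  rw [Nat.sub_self, List.drop_zero, h0] at hev
  have : (0 : ℕ) = w.toWord.length := by
    simpa [Fin.ext_iff] using hev
  have : w.toWord = [] := List.eq_nil_of_length_eq_zero this.symm
  exact hw (toWord_eq_nil_iff.mp this)

end Stmt10

namespace Stmt10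

/-- A finitely generated residually finite group is Hopfian. -/
lemma hopfian {G : Type*} [Group G] {ι : Type*} [Finite ι] (y : ι → G)
    (hgen : Subgroup.closure (Set.range y) = ⊤)
    (hrf : ∀ g : G, g ≠ 1 → ∃ (Q : Type) (_ : Group Q) (_ : Finite Q) (π : G →* Q), π g ≠ 1)
    (φ : G →* G) (hs : Function.Surjective φ) : Function.Injective φ := by
  rw [injective_iff_map_eq_one]
  intro g hg
  by_contra hg1
  obtain ⟨Q, _, _, π, hπ⟩ := hrf g hg1
  let Φ : ℕ → (G →* G) := fun k => Nat.rec (MonoidHom.id G) (fun _ ih => ih.comp φ) k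
  have hΦzero : Φ 0 = MonoidHom.id G := rfl
  have hΦsucc : ∀ k, Φ (k + 1) = (Φ k).comp φ := fun k => rfl
  have hΦs : ∀ k, Function.Surjective (Φ k) := by
    intro k; induction k with
    | zero => exact Function.surjective_id
    | succ k ih =>
      rw [hΦsucc, MonoidHom.coe_comp]
      exact Function.Surjective.comp ih hs
  have hΦadd : ∀ a b, Φ (a + b) = (Φ a).comp (Φ b) := by
    intro a b; induction b with
    | zero => simp [hΦzero]
    | succ b ih =>
      rw [show a + (b+1) = (a+b)+1 by omega, hΦsucc, hΦsucc, ih, MonoidHom.comp_assoc]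
  have hΦg : ∀ k, 0 < k → Φ k g = 1 := by
    intro k hk
    obtain ⟨c, rfl⟩ : ∃ c, k = c + 1 := ⟨k - 1, by omega⟩
    rw [hΦsucc]
    simp [hg]
  haveI : Finite (G →* Q) := by
    refine Finite.of_injective (fun (h : G →* Q) => (fun i => h (y i) : ι → Q)) ?_
    intro h1 h2 he
    refine MonoidHom.eq_of_eqOn_dense hgen ?_
    rintro _ ⟨i, rfl⟩
    exact congrFun he i
  have key : ∀ a b : ℕ, a < b → π.comp (Φ a) = π.comp (Φ b) → False := by
    intro a b hab heq
    have hb : b = (b - a) + a := by omega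
    rw [hb, hΦadd, ← MonoidHom.comp_assoc] at heq
    have hπeq : π = π.comp (Φ (b - a)) := ((MonoidHom.cancel_right (hΦs a)).mp heq)
    have : π g = π (Φ (b - a) g) := DFunLike.congr_fun hπeq g
    rw [hΦg (b - a) (by omega)] at this
    simp at this
    exact hπ this
  obtain ⟨a, b, hne, heq⟩ :=
    Finite.exists_ne_map_eq_of_infinite (fun k : ℕ => π.comp (Φ k))
  rcases Nat.lt_or_ge a b with h | h
  · exact key a b h heq
  · exact key b a (by omega) heq.symm

end Stmt10

namespace Stmt10

variable {n : ℕ}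

lemma cycProd_succ (i : Fin (n + 1)) :
    cycProd (n+1) (i + 1) = (FreeGroup.of i)⁻¹ * cycProd (n+1) i * FreeGroup.of i := by
  have h1 : cycProd (n+1) i =
      FreeGroup.of i * (List.ofFn fun j : Fin n => FreeGroup.of (i + j.succ)).prod := by
    rw [cycProd, List.ofFn_succ, List.prod_cons, add_zero]
  have h2 : cycProd (n+1) (i + 1) =
      (List.ofFn fun j : Fin n => FreeGroup.of (i + j.succ)).prod * FreeGroup.of i := by
    rw [cycProd, List.ofFn_succ', List.concat_eq_append, List.prod_append, List.prod_cons,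
      List.prod_nil, mul_one]
    have harg : (fun j : Fin n => FreeGroup.of ((i + 1 + j.castSucc : Fin (n+1)))) =
        (fun j : Fin n => FreeGroup.of (i + j.succ)) := by
      funext j
      congr 1
      rw [← Fin.coeSucc_eq_succ]
      rw [add_assoc, add_comm 1]
    have hlast : i + 1 + Fin.last n = i := by
      rw [add_assoc, (add_comm (1 : Fin (n+1)) (Fin.last n)).trans (Fin.last_add_one n), add_zero]
    rw [harg, hlast]
  rw [h1, h2]
  group

section Rot

variable {H : Type*} [Group H] (y : Fin (n + 1) → H)
  (hc : ∀ i, Commute ((List.ofFn y).prod) (y i))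

lemma lift_cycProd (i : Fin (n + 1)) :
    FreeGroup.lift y (cycProd (n+1) i) = (List.ofFn fun j => y (i + j)).prod := by
  rw [cycProd, map_list_prod, List.map_ofFn]
  have : (⇑(FreeGroup.lift y) ∘ fun j : Fin (n+1) => FreeGroup.of (i + j)) =
      fun j => y (i + j) := by
    funext j; simp
  rw [this]

include hc in
lemma lift_cycProd_eq (i : Fin (n + 1)) :
    FreeGroup.lift y (cycProd (n+1) i) = (List.ofFn y).prod := by
  open Fin.NatCast in
  have key : ∀ k : ℕ, FreeGroup.lift y (cycProd (n+1) ((k : Fin (n+1)))) = (List.ofFn y).prod := by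
    intro k
    induction k with
    | zero =>
      rw [Nat.cast_zero, lift_cycProd]
      have : (fun j : Fin (n+1) => y ((0 : Fin (n+1)) + j)) = y := by
        funext j; rw [zero_add]
      rw [this]
    | succ k ih =>
      rw [Nat.cast_add, Nat.cast_one, cycProd_succ, map_mul, map_mul, map_inv,
        FreeGroup.lift_apply_of, ih, mul_assoc, (hc _).eq, inv_mul_cancel_left]
  have := key (i : ℕ)
  rwa [Fin.cast_val_eq_self] at this

include hc in
lemma rels_satisfied : ∀ r ∈ JRels (n+1) (fun _ => 0), FreeGroup.lift y r = 1 := by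
  rintro r (⟨i, rfl⟩ | ⟨i, j, rfl⟩)
  · simp
  · rw [map_mul, map_inv, lift_cycProd_eq y hc, lift_cycProd_eq y hc, mul_inv_cancel]

/-- The induced homomorphism out of `G(n+1)`. -/
def toG : JGroup (n+1) (fun _ => 0) →* H :=
  PresentedGroup.toGroup (rels_satisfied y hc)

@[simp] lemma toG_of (i : Fin (n+1)) : toG y hc (PresentedGroup.of i) = y i :=
  PresentedGroup.toGroup.of _

end Rot

end Stmt10

namespace Stmt10

variable {n : ℕ}

local notation "P" => JGroup (n+1) (fun _ => 0)
local notation "mkP" => PresentedGroup.mk (JRels (n+1) (fun _ => 0))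

lemma mkP_rel {r : FreeGroup (Fin (n+1))} (hr : r ∈ JRels (n+1) (fun _ => 0)) :
    mkP r = 1 := by
  show (QuotientGroup.mk r : P) = 1
  rw [QuotientGroup.eq_one_iff]
  exact Subgroup.subset_normalClosure hr

lemma mkP_cycProd_eq (i j : Fin (n+1)) : mkP (cycProd (n+1) i) = mkP (cycProd (n+1) j) := by
  have h := mkP_rel (Or.inr ⟨i, j, rfl⟩)
  rw [map_mul, map_inv] at h
  exact (mul_inv_eq_one.mp h)

lemma mkP_cycProd_zero : mkP (cycProd (n+1) 0) = zElt (n+1) (fun _ => 0) := by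
  rw [cycProd, map_list_prod, List.map_ofFn, zElt]
  congr 1
  have : (⇑mkP ∘ fun j : Fin (n+1) => FreeGroup.of ((0 : Fin (n+1)) + j)) =
      fun j : Fin (n+1) => (PresentedGroup.of j : P) := by
    funext j
    simp only [Function.comp, zero_add]
    rfl
  rw [this]

lemma z_comm (g : P) : Commute g (zElt (n+1) (fun _ => 0)) := by
  have hgen : ∀ i : Fin (n+1), Commute (PresentedGroup.of i : P) (zElt (n+1) (fun _ => 0)) := by
    intro i
    have h1 : zElt (n+1) (fun _ => 0) = mkP (cycProd (n+1) (i+1)) := by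
      rw [mkP_cycProd_eq (i+1) 0, mkP_cycProd_zero]
    have h2 : zElt (n+1) (fun _ => 0) = mkP (cycProd (n+1) i) := by
      rw [mkP_cycProd_eq i 0, mkP_cycProd_zero]
    show PresentedGroup.of i * _ = _ * PresentedGroup.of i
    conv_lhs => rw [h1]
    conv_rhs => rw [h2]
    rw [cycProd_succ, map_mul, map_mul, map_inv]
    have hof : mkP (FreeGroup.of i) = (PresentedGroup.of i : P) := rfl
    rw [hof, ← mul_assoc, ← mul_assoc, mul_inv_cancel, one_mul]
  have : ∀ g ∈ Subgroup.closure (Set.range (PresentedGroup.of :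
      Fin (n+1) → P)), Commute g (zElt (n+1) (fun _ => 0)) := by
    intro g hg
    induction hg using Subgroup.closure_induction with
    | mem u hu => obtain ⟨i, rfl⟩ := hu; exact hgen i
    | one => exact Commute.one_left _
    | mul u v _ _ hu hv => exact hu.mul_left hv
    | inv u _ hu => exact hu.inv_left
  exact this g (by rw [PresentedGroup.closure_range_of]; trivial)

end Stmt10

namespace Stmt10

variable {n : ℕ}

local notation "P" => JGroup (n+1) (fun _ => 0)
local notation "F" => (FreeGroup (Fin n) × Multiplicative ℤ)

/-- images of the generators in `F_n × ℤ`. -/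
noncomputable def yF : Fin (n+1) → F := fun i =>
  if h : (i : ℕ) < n then (FreeGroup.of (⟨(i : ℕ), h⟩ : Fin n), 1)
  else ((List.ofFn fun j : Fin n => FreeGroup.of j).prod⁻¹, Multiplicative.ofAdd 1)

lemma yF_castSucc (j : Fin n) : yF (j.castSucc) = (FreeGroup.of j, 1) := by
  rw [yF, dif_pos (by simpa using j.isLt)]
  congr 1

lemma yF_last : yF (Fin.last n) =
    ((List.ofFn fun j : Fin n => FreeGroup.of j).prod⁻¹, Multiplicative.ofAdd 1) := by
  rw [yF, dif_neg (by simp)]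

lemma yF_prod : (List.ofFn (yF (n := n))).prod =
    ((1 : FreeGroup (Fin n)), Multiplicative.ofAdd (1 : ℤ)) := by
  rw [List.ofFn_succ']
  rw [List.concat_eq_append, List.prod_append, List.prod_cons, List.prod_nil, mul_one]
  have h1 : (List.ofFn fun j : Fin n => yF j.castSucc) =
      List.ofFn fun j : Fin n => ((FreeGroup.of j : FreeGroup (Fin n)), (1 : Multiplicative ℤ)) := by
    congr 1
    funext j
    exact yF_castSucc j
  rw [h1, yF_last]
  have h2 : (List.ofFn fun j : Fin n =>
      ((FreeGroup.of j : FreeGroup (Fin n)), (1 : Multiplicative ℤ))).prod =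
      ((List.ofFn fun j : Fin n => FreeGroup.of j).prod, 1) := by
    apply Prod.ext
    · show (MonoidHom.fst (FreeGroup (Fin n)) (Multiplicative ℤ))
        ((List.ofFn fun j : Fin n =>
          ((FreeGroup.of j : FreeGroup (Fin n)), (1 : Multiplicative ℤ))).prod) = _
      rw [map_list_prod, List.map_ofFn]
      rfl
    · show (MonoidHom.snd (FreeGroup (Fin n)) (Multiplicative ℤ))
        ((List.ofFn fun j : Fin n =>
          ((FreeGroup.of j : FreeGroup (Fin n)), (1 : Multiplicative ℤ))).prod) = _
      rw [map_list_prod, List.map_ofFn]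
      apply List.prod_eq_one
      intro u hu
      rw [List.mem_ofFn] at hu
      obtain ⟨j, hj⟩ := hu
      rw [← hj]
      rfl
  rw [h2, Prod.mk_mul_mk, mul_inv_cancel, one_mul]

lemma yF_comm : ∀ i, Commute ((List.ofFn (yF (n := n))).prod) (yF i) := by
  intro i
  rw [yF_prod]
  show _ * _ = _ * _
  apply Prod.ext
  · simp
  · simp [mul_comm]

/-- `G(n+1) →* F_n × ℤ`. -/
noncomputable def fP : P →* F := toG yF yF_comm

/-- `F_n →* G(n+1)`. -/
noncomputable def g1 : FreeGroup (Fin n) →* P :=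
  FreeGroup.lift (fun j : Fin n => (PresentedGroup.of j.castSucc : P))

/-- `ℤ →* G(n+1)`, `1 ↦ z`. -/
noncomputable def g2 : Multiplicative ℤ →* P := zpowersHom _ (zElt (n+1) (fun _ => 0))

noncomputable def gP : F →* P :=
  MonoidHom.noncommCoprod g1 g2 (by
    intro m t
    show Commute (g1 m) ((zElt (n+1) (fun _ => 0)) ^ (Multiplicative.toAdd t))
    exact ((z_comm (g1 m)).zpow_right _))

lemma gP_fP : (gP (n := n)).comp (fP (n := n)) = MonoidHom.id _ := by
  apply PresentedGroup.ext
  intro i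
  simp only [MonoidHom.comp_apply, MonoidHom.id_apply]
  rw [fP, toG_of]
  by_cases h : (i : ℕ) < n
  · have : i = (⟨(i : ℕ), h⟩ : Fin n).castSucc := by
      apply Fin.ext; simp
    rw [this, yF_castSucc]
    show g1 (FreeGroup.of _) * g2 1 = _
    rw [map_one, mul_one, g1, FreeGroup.lift_apply_of]
  · have hi : i = Fin.last n := by
      apply Fin.ext
      have := i.isLt; simp only [Fin.val_last]; omega
    rw [hi, yF_last]
    show g1 _ * g2 (Multiplicative.ofAdd 1) = _
    rw [map_inv]
    have hg1 : g1 ((List.ofFn fun j : Fin n => FreeGroup.of j).prod) =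
        (List.ofFn fun j : Fin n => (PresentedGroup.of j.castSucc : P)).prod := by
      rw [map_list_prod, List.map_ofFn]
      have hc3 : (⇑(g1 (n := n)) ∘ fun j : Fin n => (FreeGroup.of j : FreeGroup (Fin n))) =
          fun j : Fin n => (PresentedGroup.of j.castSucc : P) := by
        funext j
        simp [Function.comp, g1]
      rw [hc3]
    have hg2 : g2 (Multiplicative.ofAdd 1) = zElt (n+1) (fun _ => 0) := by
      rw [g2]
      simp [zpowersHom_apply]
    rw [hg1, hg2, zElt, List.ofFn_succ', List.concat_eq_append, List.prod_append,
      List.prod_cons, List.prod_nil, mul_one, inv_mul_cancel_left]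

lemma fP_g1 : ∀ w, fP (n := n) (g1 w) = (w, 1) := by
  intro w
  have : (fP (n := n)).comp g1 = MonoidHom.inl _ _ := by
    apply FreeGroup.ext_hom
    intro j
    simp only [MonoidHom.comp_apply, MonoidHom.inl_apply]
    rw [g1, FreeGroup.lift_apply_of, fP, toG_of, yF_castSucc]
  exact DFunLike.congr_fun this w

lemma fP_zElt : fP (n := n) (zElt (n+1) (fun _ => 0)) = (1, Multiplicative.ofAdd (1 : ℤ)) := by
  rw [zElt, map_list_prod, List.map_ofFn]
  have : (⇑(fP (n := n)) ∘ fun i : Fin (n+1) => (PresentedGroup.of i : P)) = yF := by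
    funext i
    simp only [Function.comp]
    rw [fP, toG_of]
  rw [this, yF_prod]

lemma fP_gP : (fP (n := n)).comp (gP (n := n)) = MonoidHom.id _ := by
  apply MonoidHom.ext
  rintro ⟨w, t⟩
  simp only [MonoidHom.comp_apply, MonoidHom.id_apply]
  have : gP (w, t) = g1 w * g2 t := rfl
  rw [this, map_mul, fP_g1]
  have hg2t : fP (n := n) (g2 t) = (1, t) := by
    show fP ((zElt (n+1) (fun _ => 0)) ^ (Multiplicative.toAdd t)) = (1, t)
    rw [map_zpow, fP_zElt]
    apply Prod.ext
    · simp
    · show (Multiplicative.ofAdd (1:ℤ)) ^ (Multiplicative.toAdd t) = t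
      rw [← ofAdd_zsmul, smul_eq_mul, mul_one, ofAdd_toAdd]
  rw [hg2t, Prod.mk_mul_mk, mul_one, one_mul]

/-- `G(n+1) ≃* F_n × ℤ`. -/
noncomputable def EP : P ≃* F :=
  MonoidHom.toMulEquiv fP gP gP_fP fP_gP

end Stmt10

namespace Stmt10

variable {n : ℕ}

local notation "P" => JGroup (n+1) (fun _ => 0)

lemma P_rf : ∀ g : P, g ≠ 1 →
    ∃ (Q : Type) (_ : Group Q) (_ : Finite Q) (π : P →* Q), π g ≠ 1 := by
  intro g hg
  have hE : EP (n := n) g ≠ 1 := fun h => hg (by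
    have := congrArg (EP (n := n)).symm h
    simpa using this)
  by_cases ht : (EP (n := n) g).2 = 1
  · -- free part is nontrivial
    have hw : (EP (n := n) g).1 ≠ 1 := by
      intro hw
      exact hE (Prod.ext hw ht)
    obtain ⟨N, π, hπ⟩ := exists_perm_hom _ hw
    exact ⟨Equiv.Perm (Fin (N+1)), inferInstance, inferInstance,
      (π.comp (MonoidHom.fst _ _)).comp (EP (n := n)).toMonoidHom, hπ⟩
  · -- ℤ part is nontrivial
    set k : ℤ := Multiplicative.toAdd (EP (n := n) g).2 with hk
    have hk0 : k ≠ 0 := fun h => ht (by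
      rw [← ofAdd_toAdd (EP (n := n) g).2, ← hk, h, ofAdd_zero])
    refine ⟨Multiplicative (ZMod (k.natAbs + 1)), inferInstance, inferInstance,
      ((AddMonoidHom.toMultiplicative (Int.castAddHom (ZMod (k.natAbs + 1)))).comp
        ((MonoidHom.snd _ _).comp (EP (n := n)).toMonoidHom)), ?_⟩
    intro hcon
    have h2 : Multiplicative.ofAdd ((k : ZMod (k.natAbs + 1))) = 1 := hcon
    have h3 : (k : ZMod (k.natAbs + 1)) = 0 := by simpa using h2
    rw [ZMod.intCast_zmod_eq_zero_iff_dvd] at h3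
    have hdvd : (k.natAbs + 1) ∣ k.natAbs := by
      have h4 := Int.natAbs_dvd_natAbs.mpr h3
      rwa [Int.natAbs_natCast] at h4
    have := Nat.le_of_dvd (by omega) hdvd
    omega

theorem main (G : Type*) [Group G]
    (hiso : Nonempty (G ≃* JGroup (n+1) (fun _ => 0)))
    (x : Fin (n+1) → G)
    (hgen : Subgroup.closure (Set.range x) = ⊤)
    (hcen : Subgroup.center G = Subgroup.zpowers ((List.ofFn x).prod)) :
    ∃ φ : JGroup (n+1) (fun _ => 0) ≃* G, ∀ i : Fin (n+1), φ (PresentedGroup.of i) = x i := by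
  obtain ⟨ψ⟩ := hiso
  have hzc : (List.ofFn x).prod ∈ Subgroup.center G := by
    rw [hcen]; exact Subgroup.mem_zpowers _
  have hc : ∀ i, Commute ((List.ofFn x).prod) (x i) :=
    fun i => ((Subgroup.mem_center_iff.mp hzc) (x i)).symm
  let φ : P →* G := toG x hc
  have hφof : ∀ i, φ (PresentedGroup.of i) = x i := fun i => toG_of x hc i
  have hφsurj : Function.Surjective φ := by
    rw [← MonoidHom.range_eq_top]
    rw [eq_top_iff, ← hgen, Subgroup.closure_le]
    rintro _ ⟨i, rfl⟩
    exact ⟨PresentedGroup.of i, hφof i⟩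
  have hθsurj : Function.Surjective (ψ.toMonoidHom.comp φ) := by
    rw [MonoidHom.coe_comp]
    exact Function.Surjective.comp ψ.surjective hφsurj
  have hθinj : Function.Injective (ψ.toMonoidHom.comp φ) :=
    hopfian PresentedGroup.of (PresentedGroup.closure_range_of _) P_rf _ hθsurj
  have hφinj : Function.Injective φ := by
    intro a b hab
    apply hθinj
    simp only [MonoidHom.coe_comp, Function.comp_apply, hab]
  exact ⟨MulEquiv.ofBijective φ ⟨hφinj, hφsurj⟩, hφof⟩

end Stmt10

/-- Let `G` be a group abstractly isomorphic to
`G(p) = ⟨a_1,…,a_p ∣ a_1⋯a_p = a_2⋯a_p a_1 = ⋯ = a_p a_1⋯a_{p−1}⟩` (i.e. `J(p·∞)`).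
If `x_1,…,x_p` generate `G` and `x_1⋯x_p` generates `Z(G)`, then `a_i ↦ x_i` induces an
isomorphism `G(p) ≃ G`. -/
theorem stmt10 (p : ℕ) (hp : 1 ≤ p) (G : Type*) [Group G]
    (hiso : Nonempty (G ≃* JGroup p (fun _ => 0)))
    (x : Fin p → G)
    (hgen : Subgroup.closure (Set.range x) = ⊤)
    (hcen : Subgroup.center G = Subgroup.zpowers ((List.ofFn x).prod)) :
    ∃ φ : JGroup p (fun _ => 0) ≃* G, ∀ i : Fin p, φ (PresentedGroup.of i) = x i := by
  obtain ⟨n, rfl⟩ : ∃ n, p = n + 1 := ⟨p - 1, by omega⟩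
  exact Stmt10.main G hiso x hgen hcen
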